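/- Let β ∈ (0,1), α > −1, ρ > 0, T > 0, and 0 < t₁ < t₂ < T. Let φ_ρ ∈ C^∞(ℝ²) satisfy 0 ≤ φ_ρ ≤ 1, φ_ρ ≡ 1 on B_{ρ/2}(0), and φ_ρ ≡ 0 outside B_ρ(0). Let Θ : ℝ² → ℝ be β-Hölder continuous and suppose that for some r ∈ [1,∞) and γ ∈ ℝ one has ∫_{|y| ≤ L} |Θ(y)|^r dy ≲ L^γ for all sufficiently large L. For y ∈ ℝ² \ {0} define A_y = { t ∈ [t₁, t₂] : (ρ/8)/|y| ≤ (T−t)^{1/(1+α)} ≤ (ρ/4)/|y| } and Ũ^{(1)}(y) = ∫_{t₁}^{t₂} ( ∫_{ℝ²} |(y−z)^⊥ / |y−z|^{2+β}| · |Θ(z)| · φ_ρ(z (T−t)^{1/(1+α)}) dz ) 𝟙_{A_y}(t) dt, where (a,b)^⊥ = (−b,a) and 𝟙_{A_y} is the indicator function of A_y. Then ∫_{L ≤ |y| ≤ 2L} |Ũ^{(1)}(y)|^r dy ≲ L^{γ − r(α+β)} for all sufficiently large L, with implicit constant independent of t₁, t₂ and L. -/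

import Mathlib

open MeasureTheory Filter Metric Set
open scoped Topology ENNReal NNReal

noncomputable section

/-- The plane `ℝ²`. -/
abbrev R2 : Type := EuclideanSpace ℝ (Fin 2)

/-- The rotation by 90 degrees: `(a, b)^⊥ = (-b, a)`. -/
def perp (v : R2) : R2 := (EuclideanSpace.equiv (Fin 2) ℝ).symm ![-(v 1), v 0]

/-- `Θ` is `β`-Hölder continuous on `ℝ²`. -/
def HolderBeta (β : ℝ) (Θ : R2 → ℝ) : Prop :=
  ∃ C : ℝ, 0 ≤ C ∧ ∀ x y : R2, |Θ x - Θ y| ≤ C * ‖x - y‖ ^ β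

/-- The set `A_y = { t ∈ [t₁,t₂] : ρ/(8|y|) ≤ (T-t)^{1/(1+α)} ≤ ρ/(4|y|) }`. -/
def timeSet (α ρ T t₁ t₂ : ℝ) (y : R2) : Set ℝ :=
  {t : ℝ | t ∈ Icc t₁ t₂ ∧ ρ / 8 / ‖y‖ ≤ (T - t) ^ (1 / (1 + α)) ∧
    (T - t) ^ (1 / (1 + α)) ≤ ρ / 4 / ‖y‖}

/-- The function
`Ũ⁽¹⁾(y) = ∫_{t₁}^{t₂} ( ∫_{ℝ²} |(y-z)^⊥/|y-z|^{2+β}| |Θ(z)| φ_ρ(z (T-t)^{1/(1+α)}) dz ) 𝟙_{A_y}(t) dt`. -/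
def Utilde (β α ρ T t₁ t₂ : ℝ) (φρ Θ : R2 → ℝ) (y : R2) : ℝ :=
  ∫ t in t₁..t₂,
    (timeSet α ρ T t₁ t₂ y).indicator
      (fun t => ∫ z : R2,
        (‖perp (y - z)‖ / ‖y - z‖ ^ (2 + β)) * |Θ z| * φρ (((T - t) ^ (1 / (1 + α))) • z)) t


lemma norm_perp (v : R2) : ‖perp v‖ = ‖v‖ := by
  rw [EuclideanSpace.norm_eq, EuclideanSpace.norm_eq]
  congr 1
  simp [perp, Fin.sum_univ_two]
  ring

lemma kernel_abs_eq {β : ℝ} (hβ : 0 < β) (w : R2) :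
    ‖perp w‖ / ‖w‖ ^ (2 + β) = ‖w‖ ^ (-(1 + β)) := by
  rw [norm_perp]
  rcases eq_or_ne w 0 with h | h
  · rw [h]
    simp only [norm_zero]
    rw [Real.zero_rpow (by positivity), Real.zero_rpow (by intro hc; nlinarith), div_zero]
  · have h0 : 0 < ‖w‖ := norm_pos_iff.2 h
    calc ‖w‖ / ‖w‖ ^ (2 + β) = ‖w‖ ^ (1 : ℝ) / ‖w‖ ^ (2 + β) := by rw [Real.rpow_one]
      _ = ‖w‖ ^ ((1 : ℝ) - (2 + β)) := (Real.rpow_sub h0 _ _).symm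
      _ = ‖w‖ ^ (-(1 + β)) := by ring_nf

lemma kint {c : ℝ} (hc1 : -2 < c) (hc2 : c < 0) :
    ∃ D : ℝ≥0∞, D ≠ ⊤ ∧ ∀ R : ℝ, 0 < R →
      ∫⁻ w in closedBall (0 : R2) R, ENNReal.ofReal (‖w‖ ^ c) ≤ ENNReal.ofReal (R ^ (2 + c)) * D := by
  have hhalf : (0 : ℝ) < 1 / 2 := by norm_num
  set V : ℝ≥0∞ := volume (ball (0 : R2) 1) with hV
  have hVtop : V ≠ ⊤ := measure_ball_lt_top.ne
  set q : ℝ := (1 / 2 : ℝ) ^ (2 + c) with hq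
  have hq0 : 0 ≤ q := Real.rpow_nonneg hhalf.le _
  have hq1 : q < 1 := Real.rpow_lt_one hhalf.le (by norm_num) (by linarith)
  refine ⟨ENNReal.ofReal ((1 / 2 : ℝ) ^ c) * V * (1 - ENNReal.ofReal q)⁻¹, ?_, ?_⟩
  · refine ENNReal.mul_ne_top (ENNReal.mul_ne_top ENNReal.ofReal_ne_top hVtop)
      (ENNReal.inv_ne_top.2 ?_)
    rw [Ne, tsub_eq_zero_iff_le, not_le]
    exact ENNReal.ofReal_lt_one.2 hq1
  intro R hR
  set rr : ℕ → ℝ := fun n => R * (1 / 2 : ℝ) ^ n with hrr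
  have hrpos : ∀ n, 0 < rr n := fun n => mul_pos hR (pow_pos hhalf n)
  set S : ℕ → Set R2 := fun n => closedBall 0 (rr n) \ closedBall 0 (rr (n + 1)) with hS
  have hcov : (closedBall (0 : R2) R) \ ({0} : Set R2) ⊆ ⋃ n, S n := by
    intro w hw
    have hw0 : 0 < ‖w‖ := by
      have : w ≠ 0 := by simpa using hw.2
      exact norm_pos_iff.2 this
    have hwR : ‖w‖ ≤ R := mem_closedBall_zero_iff.1 hw.1
    have hex : ∃ k, rr k < ‖w‖ := by
      obtain ⟨k, hk⟩ := exists_pow_lt_of_lt_one (div_pos hw0 hR) (by norm_num : (1 / 2 : ℝ) < 1)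
      exact ⟨k, by rw [hrr]; exact (lt_div_iff₀' hR).1 hk⟩
    have h0 : Nat.find hex ≠ 0 := by
      intro h0
      have h1 := Nat.find_spec hex
      rw [h0] at h1
      simp only [hrr, pow_zero, mul_one] at h1
      linarith
    refine mem_iUnion.2 ⟨Nat.find hex - 1, ?_, ?_⟩
    · have hmin := Nat.find_min hex (Nat.sub_lt (Nat.pos_of_ne_zero h0) one_pos)
      push_neg at hmin
      exact mem_closedBall_zero_iff.2 hmin
    · rw [Nat.sub_add_cancel (Nat.one_le_iff_ne_zero.2 h0)]
      intro hmem
      exact absurd (mem_closedBall_zero_iff.1 hmem) (not_le.2 (Nat.find_spec hex))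
  have hAE : (closedBall (0 : R2) R : Set R2) =ᵐ[volume] (closedBall (0 : R2) R \ ({0} : Set R2)) :=
    (diff_null_ae_eq_self (measure_singleton 0)).symm
  calc ∫⁻ w in closedBall (0 : R2) R, ENNReal.ofReal (‖w‖ ^ c)
      = ∫⁻ w in closedBall (0 : R2) R \ {0}, ENNReal.ofReal (‖w‖ ^ c) := setLIntegral_congr hAE
    _ ≤ ∫⁻ w in ⋃ n, S n, ENNReal.ofReal (‖w‖ ^ c) := lintegral_mono_set hcov
    _ ≤ ∑' n, ∫⁻ w in S n, ENNReal.ofReal (‖w‖ ^ c) := lintegral_iUnion_le _ _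
    _ ≤ ∑' n, ENNReal.ofReal (R ^ (2 + c) * ((1 / 2 : ℝ) ^ c * q ^ n)) * V := by
        refine ENNReal.tsum_le_tsum fun n => ?_
        have hSsub : S n ⊆ closedBall 0 (rr n) := diff_subset
        have hpt : ∀ w ∈ S n, ENNReal.ofReal (‖w‖ ^ c) ≤ ENNReal.ofReal (rr (n + 1) ^ c) := by
          intro w hw
          have hlt : rr (n + 1) < ‖w‖ :=
            not_le.1 (fun h => hw.2 (mem_closedBall_zero_iff.2 h))
          exact ENNReal.ofReal_le_ofReal
            (Real.rpow_le_rpow_of_nonpos (hrpos (n + 1)) hlt.le hc2.le)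
        calc ∫⁻ w in S n, ENNReal.ofReal (‖w‖ ^ c)
            ≤ ∫⁻ _ in S n, ENNReal.ofReal (rr (n + 1) ^ c) :=
              setLIntegral_mono measurable_const hpt
          _ = ENNReal.ofReal (rr (n + 1) ^ c) * volume (S n) := setLIntegral_const _ _
          _ ≤ ENNReal.ofReal (rr (n + 1) ^ c) * (ENNReal.ofReal (rr n ^ 2) * V) := by
              refine mul_le_mul_right ?_ _
              calc volume (S n) ≤ volume (closedBall (0 : R2) (rr n)) := measure_mono hSsub
                _ = ENNReal.ofReal (rr n ^ 2) * V := by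
                    rw [Measure.addHaar_closedBall _ _ (hrpos n).le]
                    congr 2
                    simp [finrank_euclideanSpace_fin]
          _ = ENNReal.ofReal (R ^ (2 + c) * ((1 / 2 : ℝ) ^ c * q ^ n)) * V := by
              rw [← mul_assoc, ← ENNReal.ofReal_mul (Real.rpow_nonneg (hrpos _).le _)]
              congr 2
              have h1 : rr (n + 1) ^ c = R ^ c * (1 / 2 : ℝ) ^ (((n + 1 : ℕ) : ℝ) * c) := by
                show (R * (1 / 2 : ℝ) ^ (n + 1)) ^ c = _
                rw [Real.mul_rpow hR.le (by positivity), ← Real.rpow_natCast (1 / 2 : ℝ) (n + 1),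
                  ← Real.rpow_mul hhalf.le]
              have h2 : (rr n : ℝ) ^ (2 : ℕ) = R ^ (2 : ℝ) * (1 / 2 : ℝ) ^ ((n : ℝ) * 2) := by
                show (R * (1 / 2 : ℝ) ^ n) ^ (2 : ℕ) = _
                rw [mul_pow, ← Real.rpow_natCast R 2, ← Real.rpow_natCast ((1 / 2 : ℝ) ^ n) 2,
                  ← Real.rpow_natCast (1 / 2 : ℝ) n, ← Real.rpow_mul hhalf.le]
                norm_num
              have h3 : (q : ℝ) ^ n = (1 / 2 : ℝ) ^ ((2 + c) * (n : ℝ)) := by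
                rw [hq, ← Real.rpow_natCast ((1 / 2 : ℝ) ^ (2 + c)) n, ← Real.rpow_mul hhalf.le]
              rw [h1, h2, h3,
                show R ^ c * (1 / 2 : ℝ) ^ (((n + 1 : ℕ) : ℝ) * c) * (R ^ (2 : ℝ) * (1 / 2 : ℝ) ^ ((n : ℝ) * 2))
                  = (R ^ c * R ^ (2 : ℝ)) * ((1 / 2 : ℝ) ^ (((n + 1 : ℕ) : ℝ) * c) * (1 / 2 : ℝ) ^ ((n : ℝ) * 2)) from by ring,
                ← Real.rpow_add hR, ← Real.rpow_add hhalf, ← Real.rpow_add hhalf]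
              congr 1
              · congr 1; ring
              · congr 1; push_cast; ring
    _ = ENNReal.ofReal (R ^ (2 + c)) * (ENNReal.ofReal ((1 / 2 : ℝ) ^ c) * V * (1 - ENNReal.ofReal q)⁻¹) := by
        have e1 : ∀ n : ℕ, ENNReal.ofReal (R ^ (2 + c) * ((1 / 2 : ℝ) ^ c * q ^ n)) * V
            = (ENNReal.ofReal (R ^ (2 + c)) * (ENNReal.ofReal ((1 / 2 : ℝ) ^ c) * V)) * (ENNReal.ofReal q) ^ n := by
          intro n
          rw [ENNReal.ofReal_mul (by positivity), ENNReal.ofReal_mul (by positivity),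
            ← ENNReal.ofReal_pow hq0]
          ring
        simp_rw [e1]
        rw [ENNReal.tsum_mul_left, ENNReal.tsum_geometric]
        ring

lemma holder_continuous {β : ℝ} (hβ : 0 < β) {Θ : R2 → ℝ}
    (h : ∃ C : ℝ, 0 ≤ C ∧ ∀ x y : R2, |Θ x - Θ y| ≤ C * ‖x - y‖ ^ β) :
    Continuous Θ := by
  obtain ⟨C, hC0, hC⟩ := h
  rw [Metric.continuous_iff]
  intro x ε hε
  have hC1 : (0 : ℝ) < C + 1 := by linarith
  refine ⟨(ε / (C + 1)) ^ β⁻¹, by positivity, fun y hy => ?_⟩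
  have h1 : |Θ y - Θ x| ≤ C * ‖y - x‖ ^ β := hC y x
  have h3 : ((ε / (C + 1)) ^ β⁻¹ : ℝ) ^ β = ε / (C + 1) := by
    rw [← Real.rpow_mul (by positivity), inv_mul_cancel₀ hβ.ne', Real.rpow_one]
  have h2 : ‖y - x‖ ^ β ≤ ε / (C + 1) := by
    rw [← h3]
    refine Real.rpow_le_rpow (norm_nonneg _) ?_ hβ.le
    rw [← dist_eq_norm]; exact hy.le
  rw [Real.dist_eq]
  calc |Θ y - Θ x| ≤ C * ‖y - x‖ ^ β := h1
    _ ≤ C * (ε / (C + 1)) := mul_le_mul_of_nonneg_left h2 hC0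
    _ < ε := by rw [mul_div_assoc'] at *; rw [div_lt_iff₀ hC1]; nlinarith

lemma stepA (β α ρ T : ℝ) (φρ Θ : R2 → ℝ) (hβ0 : 0 < β) (hα : -1 < α) (hρ : 0 < ρ)
    (hφ01 : ∀ x, φρ x ∈ Icc (0:ℝ) 1) (hφzero : ∀ x ∉ ball (0:R2) ρ, φρ x = 0)
    (t₁ t₂ : ℝ) (h12 : t₁ < t₂) (h2T : t₂ < T) (L : ℝ) (hL0 : 0 < L)
    (kk Fe : R2 → ℝ≥0∞)
    (hkk : kk = fun w => (closedBall (0:R2) (18*L)).indicator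
      (fun w => ENNReal.ofReal (‖w‖ ^ (-(1+β)))) w)
    (hFe : Fe = fun z => (closedBall (0:R2) (16*L)).indicator
      (fun z => ENNReal.ofReal |Θ z|) z)
    (y : R2) (hGetop : (∫⁻ z, kk (y - z) * Fe z) ≠ ⊤)
    (hyL : L ≤ ‖y‖) (hy2L : ‖y‖ ≤ 2*L) :
    0 ≤ Utilde β α ρ T t₁ t₂ φρ Θ y ∧
      Utilde β α ρ T t₁ t₂ φρ Θ y ≤ (ρ/(4*L)) ^ (1+α) * (∫⁻ z, kk (y - z) * Fe z).toReal := by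
  have hp0 : (0:ℝ) < 1 + α := by linarith
  have hy0 : (0:ℝ) < ‖y‖ := lt_of_lt_of_le hL0 hyL
  have hinn : ∀ (s : ℝ) (z : R2),
      0 ≤ (‖perp (y - z)‖ / ‖y - z‖ ^ (2 + β)) * |Θ z| * φρ (s • z) :=
    fun s z => mul_nonneg (mul_nonneg (div_nonneg (norm_nonneg _)
      (Real.rpow_nonneg (norm_nonneg _) _)) (abs_nonneg _)) (hφ01 _).1
  constructor
  · rw [Utilde, intervalIntegral.integral_of_le h12.le]
    refine setIntegral_nonneg measurableSet_Ioc fun t _ => ?_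
    exact indicator_nonneg (fun t' _ => integral_nonneg fun z => hinn _ z) t
  haveI : IsFiniteMeasure (volume.restrict (Ioc t₁ t₂)) := ⟨by
    rw [Measure.restrict_apply_univ]
    exact measure_Ioc_lt_top⟩
  have haa0 : (0:ℝ) < ρ / 8 / ‖y‖ := by positivity
  have hbb0 : (0:ℝ) < ρ / 4 / ‖y‖ := by positivity
  set G : ℝ := (∫⁻ z, kk (y - z) * Fe z).toReal with hG
  have hGnn : (0:ℝ) ≤ G := ENNReal.toReal_nonneg
  set A' : Set ℝ := Icc (T - (ρ / 4 / ‖y‖) ^ (1+α)) (T - (ρ / 8 / ‖y‖) ^ (1+α)) with hA'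
  have hptwise : ∀ t, (timeSet α ρ T t₁ t₂ y).indicator
      (fun t => ∫ z : R2,
        (‖perp (y - z)‖ / ‖y - z‖ ^ (2 + β)) * |Θ z| * φρ (((T - t) ^ (1 / (1 + α))) • z)) t
      ≤ A'.indicator (fun _ => G) t := by
    intro t
    by_cases ht : t ∈ timeSet α ρ T t₁ t₂ y
    · have ht' := ht
      simp only [timeSet, mem_setOf_eq] at ht'
      obtain ⟨htI, hs1, hs2⟩ := ht'
      set s : ℝ := (T - t) ^ (1 / (1 + α)) with hs
      have hTt : 0 < T - t := by have := htI.2; linarith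
      have hs0 : 0 < s := Real.rpow_pos_of_pos hTt _
      have hsp : s ^ (1 + α) = T - t := by
        rw [hs, ← Real.rpow_mul hTt.le, one_div, inv_mul_cancel₀ (ne_of_gt hp0), Real.rpow_one]
      have htA' : t ∈ A' := by
        constructor
        · have h1 : s ^ (1 + α) ≤ (ρ / 4 / ‖y‖) ^ (1 + α) :=
            Real.rpow_le_rpow hs0.le hs2 hp0.le
          rw [hsp] at h1; linarith
        · have h1 : (ρ / 8 / ‖y‖) ^ (1 + α) ≤ s ^ (1 + α) :=
            Real.rpow_le_rpow haa0.le hs1 hp0.le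
          rw [hsp] at h1; linarith
      rw [indicator_of_mem ht, indicator_of_mem htA']
      -- inner integral ≤ G
      have hbound : ∀ z : R2,
          ENNReal.ofReal ‖(‖perp (y - z)‖ / ‖y - z‖ ^ (2 + β)) * |Θ z| * φρ (s • z)‖
            ≤ kk (y - z) * Fe z := by
        intro z
        rw [Real.norm_eq_abs, abs_of_nonneg (hinn s z)]
        by_cases hz : z ∈ closedBall (0:R2) (16*L)
        · have hz16 : ‖z‖ ≤ 16*L := mem_closedBall_zero_iff.1 hz
          have hyz : y - z ∈ closedBall (0:R2) (18*L) := by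
            rw [mem_closedBall_zero_iff]
            calc ‖y - z‖ ≤ ‖y‖ + ‖z‖ := norm_sub_le _ _
              _ ≤ 18*L := by linarith
          rw [hkk, hFe]
          simp only [indicator_of_mem hyz, indicator_of_mem hz]
          rw [← ENNReal.ofReal_mul (Real.rpow_nonneg (norm_nonneg _) _)]
          apply ENNReal.ofReal_le_ofReal
          rw [kernel_abs_eq hβ0]
          calc ‖y - z‖ ^ (-(1+β)) * |Θ z| * φρ (s • z)
              ≤ ‖y - z‖ ^ (-(1+β)) * |Θ z| * 1 :=
                mul_le_mul_of_nonneg_left (hφ01 _).2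
                  (mul_nonneg (Real.rpow_nonneg (norm_nonneg _) _) (abs_nonneg _))
            _ = ‖y - z‖ ^ (-(1+β)) * |Θ z| := by rw [mul_one]
        · have hz16 : 16*L < ‖z‖ := not_le.1 fun h => hz (mem_closedBall_zero_iff.2 h)
          have hφz : φρ (s • z) = 0 := by
            apply hφzero
            simp only [mem_ball, dist_zero_right, not_lt]
            rw [norm_smul, Real.norm_eq_abs, abs_of_pos hs0]
            have h1 : ρ / 8 / ‖y‖ * ‖z‖ ≤ s * ‖z‖ :=
              mul_le_mul_of_nonneg_right hs1 (norm_nonneg _)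
            have h2 : ρ ≤ ρ / 8 / ‖y‖ * ‖z‖ := by
              rw [div_div, div_mul_eq_mul_div, le_div_iff₀ (by positivity)]
              have h3 : 8 * ‖y‖ ≤ ‖z‖ := by linarith
              nlinarith
            linarith
          rw [hφz, mul_zero]
          simp
      calc (∫ z : R2, (‖perp (y - z)‖ / ‖y - z‖ ^ (2 + β)) * |Θ z| * φρ (s • z))
          ≤ |∫ z : R2, (‖perp (y - z)‖ / ‖y - z‖ ^ (2 + β)) * |Θ z| * φρ (s • z)| := le_abs_self _
        _ = ‖∫ z : R2, (‖perp (y - z)‖ / ‖y - z‖ ^ (2 + β)) * |Θ z| * φρ (s • z)‖ :=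
            (Real.norm_eq_abs _).symm
        _ ≤ (∫⁻ z, ENNReal.ofReal
              ‖(‖perp (y - z)‖ / ‖y - z‖ ^ (2 + β)) * |Θ z| * φρ (s • z)‖).toReal :=
            norm_integral_le_lintegral_norm _
        _ ≤ G := ENNReal.toReal_mono hGetop (lintegral_mono hbound)
    · rw [indicator_of_notMem ht]
      exact indicator_nonneg (fun _ _ => hGnn) t
  calc Utilde β α ρ T t₁ t₂ φρ Θ y
      = ∫ t in Ioc t₁ t₂, (timeSet α ρ T t₁ t₂ y).indicator
          (fun t => ∫ z : R2,
            (‖perp (y - z)‖ / ‖y - z‖ ^ (2 + β)) * |Θ z| * φρ (((T - t) ^ (1 / (1 + α))) • z)) t := by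
        rw [Utilde, intervalIntegral.integral_of_le h12.le]
    _ ≤ ∫ t in Ioc t₁ t₂, A'.indicator (fun _ => G) t :=
        integral_mono_of_nonneg
          (ae_of_all _ fun t => indicator_nonneg
            (fun t' _ => integral_nonneg fun z => hinn _ z) t)
          ((integrable_const _).indicator measurableSet_Icc)
          (ae_of_all _ hptwise)
    _ = ((volume.restrict (Ioc t₁ t₂)) A').toReal • G := by
        rw [integral_indicator measurableSet_Icc, setIntegral_const, measureReal_def]
    _ ≤ (ρ/(4*L)) ^ (1+α) * G := by
        rw [smul_eq_mul]
        refine mul_le_mul_of_nonneg_right ?_ hGnn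
        refine ENNReal.toReal_le_of_le_ofReal (by positivity) ?_
        calc (volume.restrict (Ioc t₁ t₂)) A'
            ≤ volume A' := by
              rw [Measure.restrict_apply measurableSet_Icc]
              exact measure_mono inter_subset_left
          _ = ENNReal.ofReal ((T - (ρ / 8 / ‖y‖) ^ (1+α)) - (T - (ρ / 4 / ‖y‖) ^ (1+α))) :=
              Real.volume_Icc
          _ ≤ ENNReal.ofReal ((ρ/(4*L)) ^ (1+α)) := by
              apply ENNReal.ofReal_le_ofReal
              have h1 : (0:ℝ) ≤ (ρ / 8 / ‖y‖) ^ (1+α) := Real.rpow_nonneg haa0.le _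
              have h2 : (ρ / 4 / ‖y‖) ^ (1+α) ≤ (ρ/(4*L)) ^ (1+α) := by
                refine Real.rpow_le_rpow hbb0.le ?_ hp0.le
                rw [div_div]
                exact div_le_div_of_nonneg_left hρ.le (by positivity) (by linarith)
              linarith

/-- **Lemma 4.2** (case `β ∈ (0,1)`): if `∫_{|y|≤L} |Θ|^r ≲ L^γ` for large `L`,
then `∫_{L ≤ |y| ≤ 2L} |Ũ⁽¹⁾(y)|^r ≲ L^{γ - r(α+β)}` for large `L`, with a
constant independent of `t₁`, `t₂` and `L`. -/
theorem Utilde_dyadic_estimate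
    (β α ρ T γ r : ℝ) (φρ Θ : R2 → ℝ)
    (hβ : β ∈ Ioo (0:ℝ) 1) (hα : -1 < α) (hρ : 0 < ρ) (hT : 0 < T)
    (hφsmooth : ContDiff ℝ (⊤ : ℕ∞) φρ)
    (hφ01 : ∀ x, φρ x ∈ Icc (0:ℝ) 1)
    (hφone : ∀ x ∈ ball (0:R2) (ρ / 2), φρ x = 1)
    (hφzero : ∀ x ∉ ball (0:R2) ρ, φρ x = 0)
    (hΘHolder : HolderBeta β Θ) (hr : 1 ≤ r)
    (hΘr : ∃ C L₁ : ℝ, ∀ L ≥ L₁,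
      (∫ y in closedBall (0:R2) L, |Θ y| ^ r) ≤ C * L ^ γ) :
    ∃ C L₀ : ℝ, 0 < C ∧ ∀ t₁ t₂ : ℝ, 0 < t₁ → t₁ < t₂ → t₂ < T → ∀ L ≥ L₀,
      (∫ y in {y : R2 | L ≤ ‖y‖ ∧ ‖y‖ ≤ 2 * L}, |Utilde β α ρ T t₁ t₂ φρ Θ y| ^ r)
        ≤ C * L ^ (γ - r * (α + β)) := by
  obtain ⟨hβ0, hβ1⟩ := hβ
  have hΘc : Continuous Θ := holder_continuous hβ0 hΘHolder
  obtain ⟨CH, hCH0, hCH⟩ := hΘHolder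
  obtain ⟨CΘ, L₁, hCΘ⟩ := hΘr
  obtain ⟨D, hDtop, hD⟩ := kint (c := -(1+β)) (by linarith) (by linarith)
  set d : ℝ := D.toReal with hd
  have hd0 : 0 ≤ d := ENNReal.toReal_nonneg
  have hDd : D = ENNReal.ofReal d := (ENNReal.ofReal_toReal hDtop).symm
  have hp0 : (0:ℝ) < 1 + α := by linarith
  have hr0 : (0:ℝ) < r := by linarith
  have hCΘ0 : 0 ≤ CΘ := by
    have h1 : (0:ℝ) < max L₁ 1 := lt_of_lt_of_le one_pos (le_max_right _ _)
    have h2 := hCΘ (max L₁ 1) (le_max_left _ _)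
    have h3 : 0 ≤ ∫ y in closedBall (0:R2) (max L₁ 1), |Θ y| ^ r :=
      setIntegral_nonneg measurableSet_closedBall fun y _ => Real.rpow_nonneg (abs_nonneg _) _
    have h4 : (0:ℝ) < (max L₁ 1) ^ γ := Real.rpow_pos_of_pos h1 _
    nlinarith
  set Creal : ℝ := (ρ/4) ^ ((1+α)*r) * 18 ^ ((1-β)*r) * d ^ r * (CΘ * 16 ^ γ) with hCreal
  have hCreal0 : 0 ≤ Creal := by positivity
  refine ⟨Creal + 1, max |L₁| 1, by linarith, ?_⟩
  intro t₁ t₂ ht₁ h12 h2T L hL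
  have hL1 : (1:ℝ) ≤ L := le_trans (le_max_right _ _) hL
  have hL0 : (0:ℝ) < L := lt_of_lt_of_le one_pos hL1
  have h16L : L₁ ≤ 16 * L := by
    have h := le_trans (le_max_left |L₁| 1) hL
    have := le_abs_self L₁
    linarith
  set kk : R2 → ℝ≥0∞ := fun w => (closedBall (0:R2) (18*L)).indicator
    (fun w => ENNReal.ofReal (‖w‖ ^ (-(1+β)))) w with hkk
  set Fe : R2 → ℝ≥0∞ := fun z => (closedBall (0:R2) (16*L)).indicator
    (fun z => ENNReal.ofReal |Θ z|) z with hFe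
  set Fer : R2 → ℝ≥0∞ := fun z => (closedBall (0:R2) (16*L)).indicator
    (fun z => ENNReal.ofReal (|Θ z| ^ r)) z with hFer
  have hkkm : Measurable kk :=
    ((measurable_norm.pow measurable_const).ennreal_ofReal).indicator measurableSet_closedBall
  have hFem : Measurable Fe :=
    ((continuous_abs.comp hΘc).measurable.ennreal_ofReal).indicator measurableSet_closedBall
  have hFerm : Measurable Fer :=
    (((continuous_abs.comp hΘc).measurable.pow measurable_const).ennreal_ofReal).indicator
      measurableSet_closedBall
  have hFepow : ∀ z, Fe z ^ r = Fer z := by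
    intro z
    by_cases hz : z ∈ closedBall (0:R2) (16*L)
    · simp only [hFe, hFer, indicator_of_mem hz]
      rw [ENNReal.ofReal_rpow_of_nonneg (abs_nonneg _) hr0.le]
    · simp only [hFe, hFer, indicator_of_notMem hz]
      exact ENNReal.zero_rpow_of_pos hr0
  have hFertop : ∀ z, Fer z ≠ ⊤ := by
    intro z
    by_cases hz : z ∈ closedBall (0:R2) (16*L)
    · simp only [hFer, indicator_of_mem hz]; exact ENNReal.ofReal_ne_top
    · simp only [hFer, indicator_of_notMem hz]; exact ENNReal.zero_ne_top
  set IK : ℝ≥0∞ := ∫⁻ w, kk w with hIK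
  have hIKle : IK ≤ ENNReal.ofReal ((18*L) ^ (1-β) * d) := by
    have h1 := hD (18*L) (by positivity)
    rw [hIK, hkk, lintegral_indicator measurableSet_closedBall]
    calc ∫⁻ w in closedBall (0:R2) (18*L), ENNReal.ofReal (‖w‖ ^ (-(1+β)))
        ≤ ENNReal.ofReal ((18*L) ^ (2 + -(1+β))) * D := h1
      _ = ENNReal.ofReal ((18*L) ^ (1-β) * d) := by
          rw [hDd, ← ENNReal.ofReal_mul (by positivity),
            show (2 + -(1+β)) = 1 - β from by ring]
  have hIKtop : IK ≠ ⊤ := ne_top_of_le_ne_top ENNReal.ofReal_ne_top hIKle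
  have hIKsub : ∀ z : R2, (∫⁻ w, kk (w - z)) = IK := fun z =>
    (measurePreserving_sub_right volume z).lintegral_comp hkkm
  have hIKsub' : ∀ y : R2, (∫⁻ z, kk (y - z)) = IK := fun y =>
    (Measure.measurePreserving_sub_left volume y).lintegral_comp hkkm
  set MΘ : ℝ := |Θ 0| + CH * (16*L) ^ β with hMΘ
  have hFeM : ∀ z, Fe z ≤ ENNReal.ofReal MΘ := by
    intro z
    by_cases hz : z ∈ closedBall (0:R2) (16*L)
    · simp only [hFe, indicator_of_mem hz]
      apply ENNReal.ofReal_le_ofReal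
      have h1 : |Θ z| - |Θ 0| ≤ |Θ z - Θ 0| := abs_sub_abs_le_abs_sub _ _
      have h2 : |Θ z - Θ 0| ≤ CH * ‖z - (0:R2)‖ ^ β := hCH z 0
      have h3 : ‖z - (0:R2)‖ ^ β ≤ (16*L) ^ β := by
        refine Real.rpow_le_rpow (norm_nonneg _) ?_ hβ0.le
        rw [sub_zero]
        exact mem_closedBall_zero_iff.1 hz
      have h4 := mul_le_mul_of_nonneg_left h3 hCH0
      rw [hMΘ]; linarith
    · simp only [hFe, indicator_of_notMem hz]; exact zero_le
  set Ge : R2 → ℝ≥0∞ := fun y => ∫⁻ z, kk (y - z) * Fe z with hGe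
  have hGele : ∀ y : R2, Ge y ≤ ENNReal.ofReal MΘ * IK := by
    intro y
    calc Ge y ≤ ∫⁻ z, ENNReal.ofReal MΘ * kk (y - z) := by
          refine lintegral_mono fun z => ?_
          rw [mul_comm (ENNReal.ofReal MΘ)]
          exact mul_le_mul_right (hFeM z) _
      _ = ENNReal.ofReal MΘ * ∫⁻ z, kk (y - z) :=
          lintegral_const_mul' _ _ ENNReal.ofReal_ne_top
      _ = ENNReal.ofReal MΘ * IK := by rw [hIKsub' y]
  have hGetop : ∀ y : R2, Ge y ≠ ⊤ := fun y =>
    ne_top_of_le_ne_top (ENNReal.mul_ne_top ENNReal.ofReal_ne_top hIKtop) (hGele y)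
  set ann : Set R2 := {y : R2 | L ≤ ‖y‖ ∧ ‖y‖ ≤ 2*L} with hann
  have hannm : MeasurableSet ann := by
    have : ann = (fun y : R2 => ‖y‖) ⁻¹' (Icc L (2*L)) := by
      ext y; simp [hann, mem_Icc]
    rw [this]
    exact measurable_norm measurableSet_Icc
  -- Hölder step
  have hW : ∀ y ∈ ann, (Ge y) ^ r ≤ IK ^ (r-1) * ∫⁻ z, kk (y - z) * Fer z := by
    intro y hy
    rcases eq_or_lt_of_le hr with hre | hre
    · rw [← hre]
      simp only [ENNReal.rpow_one, sub_self, ENNReal.rpow_zero, one_mul]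
      refine le_of_eq (lintegral_congr fun z => ?_)
      rw [← hFepow z, ← hre, ENNReal.rpow_one]
    · set q' : ℝ := Real.conjExponent r with hq'
      have hpq : q'.HolderConjugate r := (Real.HolderConjugate.conjExponent hre).symm
      have hq'0 : 0 < q' := hpq.pos
      have hmeask : Measurable fun z : R2 => kk (y - z) :=
        hkkm.comp (measurable_const.sub measurable_id)
      have step : Ge y ≤ IK ^ (1/q') * (∫⁻ z, kk (y - z) * Fer z) ^ (1/r) := by
        have h := ENNReal.lintegral_mul_le_Lp_mul_Lq volume hpq
          ((hmeask.pow measurable_const).aemeasurable :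
            AEMeasurable (fun z : R2 => kk (y - z) ^ q'⁻¹) volume)
          (((hmeask.pow measurable_const).mul hFem).aemeasurable :
            AEMeasurable (fun z : R2 => kk (y - z) ^ r⁻¹ * Fe z) volume)
        simp only [Pi.mul_apply] at h
        have e1 : ∀ z : R2, kk (y - z) ^ q'⁻¹ * (kk (y - z) ^ r⁻¹ * Fe z) = kk (y - z) * Fe z := by
          intro z
          rw [← mul_assoc, ← ENNReal.rpow_add_of_nonneg _ _ (by positivity) (by positivity),
            hpq.inv_add_inv_eq_one, ENNReal.rpow_one]
        have e2 : ∀ z : R2, (kk (y - z) ^ q'⁻¹) ^ q' = kk (y - z) := by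
          intro z
          rw [← ENNReal.rpow_mul, inv_mul_cancel₀ (ne_of_gt hq'0), ENNReal.rpow_one]
        have e3 : ∀ z : R2, (kk (y - z) ^ r⁻¹ * Fe z) ^ r = kk (y - z) * Fer z := by
          intro z
          rw [ENNReal.mul_rpow_of_nonneg _ _ hr0.le, ← ENNReal.rpow_mul,
            inv_mul_cancel₀ (ne_of_gt hr0), ENNReal.rpow_one, hFepow z]
        simp only [e1, e2, e3] at h
        rw [hGe, ← hIKsub' y]
        simpa using h
      calc (Ge y) ^ r ≤ (IK ^ (1/q') * (∫⁻ z, kk (y - z) * Fer z) ^ (1/r)) ^ r :=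
            ENNReal.rpow_le_rpow step hr0.le
        _ = IK ^ (r-1) * ∫⁻ z, kk (y - z) * Fer z := by
            rw [ENNReal.mul_rpow_of_nonneg _ _ hr0.le, ← ENNReal.rpow_mul, ← ENNReal.rpow_mul]
            congr 1
            · congr 1
              have h1 : q'⁻¹ + r⁻¹ = 1 := hpq.inv_add_inv_eq_one
              field_simp
              field_simp at h1
              nlinarith [hpq.pos, hr0]
            · rw [one_div, inv_mul_cancel₀ (ne_of_gt hr0), ENNReal.rpow_one]
  -- pointwise bound
  have hpt : ∀ y ∈ ann, ENNReal.ofReal ‖|Utilde β α ρ T t₁ t₂ φρ Θ y| ^ r‖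
      ≤ ENNReal.ofReal ((ρ/(4*L)) ^ (1+α)) ^ r * Ge y ^ r := by
    intro y hy
    obtain ⟨hU0, hUle⟩ := stepA β α ρ T φρ Θ hβ0 hα hρ hφ01 hφzero t₁ t₂ h12 h2T L hL0
      kk Fe hkk hFe y (hGetop y) hy.1 hy.2
    have h1 : ‖|Utilde β α ρ T t₁ t₂ φρ Θ y| ^ r‖ = |Utilde β α ρ T t₁ t₂ φρ Θ y| ^ r := by
      rw [Real.norm_eq_abs, abs_of_nonneg (Real.rpow_nonneg (abs_nonneg _) _)]
    rw [h1]
    have h2 : |Utilde β α ρ T t₁ t₂ φρ Θ y| ^ r ≤ ((ρ/(4*L)) ^ (1+α) * (Ge y).toReal) ^ r := by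
      refine Real.rpow_le_rpow (abs_nonneg _) ?_ hr0.le
      rw [abs_of_nonneg hU0]
      exact hUle
    refine le_trans (ENNReal.ofReal_le_ofReal h2) ?_
    rw [← ENNReal.ofReal_rpow_of_nonneg (by positivity) hr0.le,
      ENNReal.ofReal_mul (by positivity), ENNReal.ofReal_toReal (hGetop y),
      ENNReal.mul_rpow_of_nonneg _ _ hr0.le]
  -- Fubini step
  have hFub : (∫⁻ y in ann, ∫⁻ z, kk (y - z) * Fer z) ≤ IK * ENNReal.ofReal (CΘ * (16*L) ^ γ) := by
    have hswap : (∫⁻ y in ann, ∫⁻ z, kk (y - z) * Fer z)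
        = ∫⁻ z, ∫⁻ y in ann, kk (y - z) * Fer z := by
      refine lintegral_lintegral_swap ?_
      exact ((hkkm.comp (measurable_fst.sub measurable_snd)).mul
        (hFerm.comp measurable_snd)).aemeasurable
    rw [hswap]
    have h1 : ∀ z : R2, (∫⁻ y in ann, kk (y - z) * Fer z) ≤ Fer z * IK := by
      intro z
      rw [lintegral_mul_const' (Fer z) _ (hFertop z)]
      rw [mul_comm]
      refine mul_le_mul_right ?_ _
      refine le_trans (setLIntegral_le_lintegral _ _) ?_
      rw [hIKsub z]
    calc (∫⁻ z, ∫⁻ y in ann, kk (y - z) * Fer z) ≤ ∫⁻ z, Fer z * IK := lintegral_mono h1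
      _ = (∫⁻ z, Fer z) * IK := lintegral_mul_const' _ _ hIKtop
      _ ≤ ENNReal.ofReal (CΘ * (16*L) ^ γ) * IK := by
          refine mul_le_mul_left ?_ _
          have hint : IntegrableOn (fun z : R2 => |Θ z| ^ r) (closedBall (0:R2) (16*L)) volume :=
            (((hΘc.abs).rpow_const (fun x => Or.inr hr0.le)).continuousOn).integrableOn_compact
              (isCompact_closedBall _ _)
          calc (∫⁻ z, Fer z) = ∫⁻ z in closedBall (0:R2) (16*L), ENNReal.ofReal (|Θ z| ^ r) := by
                rw [hFer, lintegral_indicator measurableSet_closedBall]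
            _ = ENNReal.ofReal (∫ z in closedBall (0:R2) (16*L), |Θ z| ^ r) :=
                (ofReal_integral_eq_lintegral_ofReal hint
                  (ae_of_all _ fun z => Real.rpow_nonneg (abs_nonneg _) _)).symm
            _ ≤ ENNReal.ofReal (CΘ * (16*L) ^ γ) :=
                ENNReal.ofReal_le_ofReal (hCΘ (16*L) h16L)
      _ = IK * ENNReal.ofReal (CΘ * (16*L) ^ γ) := mul_comm _ _
  -- main lintegral bound
  have hmain : (∫⁻ y in ann, ENNReal.ofReal ‖|Utilde β α ρ T t₁ t₂ φρ Θ y| ^ r‖)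
      ≤ ENNReal.ofReal (Creal * L ^ (γ - r*(α+β))) := by
    set cL : ℝ := (ρ/(4*L)) ^ (1+α) with hcL
    set KL : ℝ := (18*L) ^ (1-β) * d with hKL
    set CΓ : ℝ := CΘ * (16*L) ^ γ with hCΓ
    have hcL0 : 0 ≤ cL := Real.rpow_nonneg (by positivity) _
    have hKL0 : 0 ≤ KL := mul_nonneg (Real.rpow_nonneg (by positivity) _) hd0
    have hCΓ0 : 0 ≤ CΓ := mul_nonneg hCΘ0 (Real.rpow_nonneg (by positivity) _)
    calc (∫⁻ y in ann, ENNReal.ofReal ‖|Utilde β α ρ T t₁ t₂ φρ Θ y| ^ r‖)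
        ≤ ∫⁻ y in ann, ENNReal.ofReal cL ^ r * Ge y ^ r :=
          lintegral_mono_ae ((ae_restrict_iff' hannm).2 (ae_of_all _ hpt))
      _ = ENNReal.ofReal cL ^ r * ∫⁻ y in ann, Ge y ^ r :=
          lintegral_const_mul' _ _ (ENNReal.rpow_ne_top_of_nonneg hr0.le ENNReal.ofReal_ne_top)
      _ ≤ ENNReal.ofReal cL ^ r * (IK ^ (r-1) * ∫⁻ y in ann, ∫⁻ z, kk (y - z) * Fer z) := by
          refine mul_le_mul_right ?_ _
          calc (∫⁻ y in ann, Ge y ^ r)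
              ≤ ∫⁻ y in ann, IK ^ (r-1) * ∫⁻ z, kk (y - z) * Fer z :=
                lintegral_mono_ae ((ae_restrict_iff' hannm).2 (ae_of_all _ hW))
            _ = IK ^ (r-1) * ∫⁻ y in ann, ∫⁻ z, kk (y - z) * Fer z :=
                lintegral_const_mul' _ _ (ENNReal.rpow_ne_top_of_nonneg (by linarith) hIKtop)
      _ ≤ ENNReal.ofReal cL ^ r * (IK ^ (r-1) * (IK * ENNReal.ofReal CΓ)) :=
          mul_le_mul_right (mul_le_mul_right hFub _) _
      _ ≤ ENNReal.ofReal (cL ^ r) *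
            (ENNReal.ofReal (KL ^ (r-1)) * (ENNReal.ofReal KL * ENNReal.ofReal CΓ)) := by
          have e0 : ENNReal.ofReal cL ^ r = ENNReal.ofReal (cL ^ r) :=
            ENNReal.ofReal_rpow_of_nonneg hcL0 hr0.le
          have e1 : IK ^ (r-1) ≤ ENNReal.ofReal (KL ^ (r-1)) := by
            rw [← ENNReal.ofReal_rpow_of_nonneg hKL0 (by linarith : (0:ℝ) ≤ r-1)]
            exact ENNReal.rpow_le_rpow hIKle (by linarith)
          rw [e0]
          exact mul_le_mul_right (mul_le_mul' e1 (mul_le_mul_left hIKle _)) _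
      _ = ENNReal.ofReal (cL ^ r * (KL ^ (r-1) * (KL * CΓ))) := by
          rw [← ENNReal.ofReal_mul hKL0, ← ENNReal.ofReal_mul (Real.rpow_nonneg hKL0 _),
            ← ENNReal.ofReal_mul (Real.rpow_nonneg hcL0 _)]
      _ = ENNReal.ofReal (Creal * L ^ (γ - r*(α+β))) := by
          congr 1
          have h5 : KL ^ r = KL ^ (r-1) * KL := by
            nth_rewrite 1 [show r = (r-1)+1 from by ring]
            rw [Real.rpow_add' hKL0 (by rw [sub_add_cancel]; exact ne_of_gt hr0), Real.rpow_one]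
          have hKr : KL ^ (r-1) * (KL * CΓ) = KL ^ r * CΓ := by rw [h5]; ring
          rw [hKr]
          have hcLr : cL ^ r = (ρ/4) ^ ((1+α)*r) / L ^ ((1+α)*r) := by
            rw [hcL, ← Real.rpow_mul (by positivity),
              show ρ/(4*L) = (ρ/4)/L from by rw [div_div],
              Real.div_rpow (by positivity) hL0.le]
          have hKLr : KL ^ r = 18 ^ ((1-β)*r) * L ^ ((1-β)*r) * d ^ r := by
            rw [hKL, Real.mul_rpow (Real.rpow_nonneg (by positivity) _) hd0,
              ← Real.rpow_mul (by positivity : (0:ℝ) ≤ 18*L),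
              Real.mul_rpow (by norm_num : (0:ℝ) ≤ 18) hL0.le]
          have hCΓ' : CΓ = CΘ * (16 ^ γ * L ^ γ) := by
            rw [hCΓ, Real.mul_rpow (by norm_num : (0:ℝ) ≤ 16) hL0.le]
          have hLpow : L ^ ((1-β)*r) * L ^ γ / L ^ ((1+α)*r) = L ^ (γ - r*(α+β)) := by
            rw [← Real.rpow_add hL0, ← Real.rpow_sub hL0]
            congr 1; ring
          rw [hcLr, hKLr, hCΓ', hCreal, ← hLpow]
          ring
  calc (∫ y in ann, |Utilde β α ρ T t₁ t₂ φρ Θ y| ^ r)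
      ≤ |∫ y in ann, |Utilde β α ρ T t₁ t₂ φρ Θ y| ^ r| := le_abs_self _
    _ = ‖∫ y in ann, |Utilde β α ρ T t₁ t₂ φρ Θ y| ^ r‖ := (Real.norm_eq_abs _).symm
    _ ≤ (∫⁻ y in ann, ENNReal.ofReal ‖|Utilde β α ρ T t₁ t₂ φρ Θ y| ^ r‖).toReal :=
        norm_integral_le_lintegral_norm _
    _ ≤ Creal * L ^ (γ - r*(α+β)) :=
        ENNReal.toReal_le_of_le_ofReal
          (mul_nonneg hCreal0 (Real.rpow_nonneg hL0.le _)) hmain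
    _ ≤ (Creal + 1) * L ^ (γ - r*(α+β)) := by
        have h := Real.rpow_nonneg hL0.le (γ - r*(α+β))
        nlinarith
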